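/- Let T_1 < T_2 < ... < T_L be the boundary thresholds and S_1,...,S_L the skip-comparison thresholds of an incentive-compatible confidence-based mechanism with L ≥ 2 levels, i.e., a nonnegative payment f : {-L,...,L}^G → ℝ satisfying the identities of Lemma 6 together with the strict ordering f(l,0,...,0) > f(−l,0,...,0) for all l ∈ {1,...,L}. Then necessarily T_l > S_l for all l ∈ {2,...,L}. -/
import Mathlib


/-- Proposition 1 of Appendix A.5: any incentive-compatible confidence-based
mechanism (Lemma 6 identities plus strict correct-vs-incorrect ordering) forces T_l > S_l
for all l ≥ 2. -/
theorem thresholds_T_gt_S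
    (G L : ℕ) (hG : 0 < G) (hL : 2 ≤ L)
    (S T : ℕ → ℝ)
    (hT0 : 0 < T 1) (hTmono : ∀ l : ℕ, 1 ≤ l → l < L → T l < T (l + 1)) (hTL : T L < 1)
    (hS0 : 0 < S 1) (hSmono : ∀ l : ℕ, 1 ≤ l → l < L → S l < S (l + 1)) (hSL : S L < 1)
    (hTS1 : T 1 = S 1)
    (f : (Fin G → ℤ) → ℝ)
    (hnonneg : ∀ y : Fin G → ℤ, (∀ j, -(L : ℤ) ≤ y j ∧ y j ≤ L) → 0 ≤ f y)
    (hidT : ∀ y : Fin G → ℤ, (∀ j, -(L : ℤ) ≤ y j ∧ y j ≤ L) → ∀ i : Fin G,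
      ∀ m : ℕ, 1 ≤ m → m ≤ L →
      T m * f (Function.update y i (m : ℤ))
          + (1 - T m) * f (Function.update y i (-(m : ℤ)))
        = T m * f (Function.update y i ((m : ℤ) - 1))
          + (1 - T m) * f (Function.update y i (-((m : ℤ) - 1))))
    (hidS : ∀ y : Fin G → ℤ, (∀ j, -(L : ℤ) ≤ y j ∧ y j ≤ L) → ∀ i : Fin G,
      ∀ m : ℕ, 1 ≤ m → m ≤ L →
      S m * f (Function.update y i (m : ℤ))
          + (1 - S m) * f (Function.update y i (-(m : ℤ)))
        = f (Function.update y i 0))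
    (hstrict : ∀ l : ℕ, 1 ≤ l → l ≤ L →
      f (Function.update (fun _ => (0 : ℤ)) (⟨0, hG⟩ : Fin G) (-(l : ℤ)))
        < f (Function.update (fun _ => (0 : ℤ)) (⟨0, hG⟩ : Fin G) (l : ℤ))) :
    ∀ l : ℕ, 2 ≤ l → l ≤ L → S l < T l := by
  set i0 : Fin G := ⟨0, hG⟩ with hi0
  set z : Fin G → ℤ := fun _ => 0 with hz
  have hzb : ∀ j, -(L : ℤ) ≤ z j ∧ z j ≤ L := by
    intro j
    constructor <;> simp [hz] <;> positivity
  -- abbreviation for the "gap"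
  set D : ℕ → ℝ := fun m =>
    f (Function.update z i0 (m : ℤ)) - f (Function.update z i0 (-(m : ℤ))) with hD
  have hDpos : ∀ m : ℕ, 1 ≤ m → m ≤ L → 0 < D m := by
    intro m h1 h2
    have := hstrict m h1 h2
    simp only [hD]
    linarith
  have key : ∀ m : ℕ, 2 ≤ m → m ≤ L →
      (S m - T m) * D m = (S (m - 1) - T m) * D (m - 1) := by
    intro m h2 hmL
    have h1 : 1 ≤ m := by omega
    have hT := hidT z hzb i0 m h1 hmL
    have hS1 := hidS z hzb i0 m h1 hmL
    have hS2 := hidS z hzb i0 (m - 1) (by omega) (by omega)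
    have hc : ((m - 1 : ℕ) : ℤ) = (m : ℤ) - 1 := by omega
    rw [hc] at hS2
    simp only [hD]
    rw [hc]
    linarith
  intro l hl
  induction l, hl using Nat.le_induction with
  | base =>
    intro h2L
    have hk := key 2 le_rfl h2L
    norm_num at hk
    have hd1 := hDpos 1 le_rfl (by omega)
    have hd2 := hDpos 2 (by omega) h2L
    have hT12 : T 1 < T 2 := hTmono 1 le_rfl (by omega)
    have hs : S 1 - T 2 < 0 := by linarith
    have hneg : (S 2 - T 2) * D 2 < 0 := by
      rw [hk]; exact mul_neg_of_neg_of_pos hs hd1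
    nlinarith [hneg, hd2]
  | succ n hn ih =>
    intro hle
    have hSn := ih (by omega)
    have hk := key (n + 1) (by omega) hle
    simp only [Nat.add_sub_cancel] at hk
    have hd1 := hDpos n (by omega) (by omega)
    have hd2 := hDpos (n + 1) (by omega) hle
    have hTn : T n < T (n + 1) := hTmono n (by omega) (by omega)
    have hs : S n - T (n + 1) < 0 := by linarith
    have hneg : (S (n + 1) - T (n + 1)) * D (n + 1) < 0 := by
      rw [hk]; exact mul_neg_of_neg_of_pos hs hd1
    nlinarith [hneg, hd2]
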